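/- Let L be a 3-dimensional unsolvable ℤ_p-Lie lattice admitting a diagonalizing basis, i.e., a basis (x_0,x_1,x_2) with [x_1,x_2] = a_0 x_0, [x_2,x_0] = a_1 x_1, [x_0,x_1] = a_2 x_2 where a_0, a_1, a_2 ∈ ℤ_p are all nonzero. Then L is just infinite: every nonzero ideal of L has rank 3. -/

import Mathlib

theorem stmt12 (p : ℕ) [Fact p.Prime] {L : Type*} [AddCommGroup L] [Module ℤ_[p] L]
    (f : L →ₗ[ℤ_[p]] L →ₗ[ℤ_[p]] L) (hanti : ∀ z : L, f z z = 0)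
    (hjacobi : ∀ x y z : L, f (f x y) z + f (f z x) y + f (f y z) x = 0)
    (b : Module.Basis (Fin 3) ℤ_[p] L) (a₀ a₁ a₂ : ℤ_[p])
    (h0 : a₀ ≠ 0) (h1 : a₁ ≠ 0) (h2 : a₂ ≠ 0)
    (hbr : f (b 1) (b 2) = a₀ • b 0 ∧ f (b 2) (b 0) = a₁ • b 1 ∧
           f (b 0) (b 1) = a₂ • b 2) :
    ∀ I : Submodule ℤ_[p] L, (∀ x : L, ∀ y ∈ I, f x y ∈ I) → I ≠ ⊥ →
      Module.finrank ℤ_[p] I = 3 := by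
  obtain ⟨hb12, hb20, hb01⟩ := hbr
  have hskew : ∀ x y : L, f x y = - f y x := by
    intro x y
    have h := hanti (x + y)
    simp only [map_add, LinearMap.add_apply, hanti, zero_add, add_zero] at h
    rw [add_comm] at h
    exact eq_neg_of_add_eq_zero_left h
  have hb21 : f (b 2) (b 1) = -(a₀ • b 0) := by rw [hskew, hb12]
  have hb02 : f (b 0) (b 2) = -(a₁ • b 1) := by rw [hskew, hb20]
  have hb10 : f (b 1) (b 0) = -(a₂ • b 2) := by rw [hskew, hb01]
  intro I hI hne
  obtain ⟨y, hyI, hy0⟩ := Submodule.ne_bot_iff I |>.mp hne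
  set c : Fin 3 → ℤ_[p] := fun i => b.repr y i with hc
  have hy : y = c 0 • b 0 + c 1 • b 1 + c 2 • b 2 := by
    have := b.sum_repr y
    rw [Fin.sum_univ_three] at this
    exact this.symm
  -- step 1: extract axis vectors with the coefficients of y
  have mem0 : (a₁ * a₂ * c 0) • b 0 ∈ I := by
    have h3 : (a₁ * a₂) • y + f (b 0) (f (b 0) y) ∈ I :=
      I.add_mem (I.smul_mem _ hyI) (hI _ _ (hI _ _ hyI))
    have he : (a₁ * a₂) • y + f (b 0) (f (b 0) y) = (a₁ * a₂ * c 0) • b 0 := by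
      rw [hy]
      simp only [map_add, map_smul, hb01, hb02, hanti, smul_zero, smul_neg, map_neg, map_zero]
      module
    rwa [he] at h3
  have mem1 : (a₀ * a₂ * c 1) • b 1 ∈ I := by
    have h3 : (a₀ * a₂) • y + f (b 1) (f (b 1) y) ∈ I :=
      I.add_mem (I.smul_mem _ hyI) (hI _ _ (hI _ _ hyI))
    have he : (a₀ * a₂) • y + f (b 1) (f (b 1) y) = (a₀ * a₂ * c 1) • b 1 := by
      rw [hy]
      simp only [map_add, map_smul, hb10, hb12, hanti, smul_zero, smul_neg, map_neg, map_zero]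
      module
    rwa [he] at h3
  have mem2 : (a₀ * a₁ * c 2) • b 2 ∈ I := by
    have h3 : (a₀ * a₁) • y + f (b 2) (f (b 2) y) ∈ I :=
      I.add_mem (I.smul_mem _ hyI) (hI _ _ (hI _ _ hyI))
    have he : (a₀ * a₁) • y + f (b 2) (f (b 2) y) = (a₀ * a₁ * c 2) • b 2 := by
      rw [hy]
      simp only [map_add, map_smul, hb20, hb21, hanti, smul_zero, smul_neg, map_neg, map_zero]
      module
    rwa [he] at h3
  -- step 2: spread from one axis to all three
  have spread : ∃ t : Fin 3 → ℤ_[p], (∀ i, t i ≠ 0) ∧ ∀ i, t i • b i ∈ I := by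
    have hcne : ∃ i, c i ≠ 0 := by
      by_contra h
      push_neg at h
      apply hy0
      rw [hy, h 0, h 1, h 2]; simp
    obtain ⟨i, hci⟩ := hcne
    fin_cases i
    · -- c 0 ≠ 0, start from axis 0
      set s := a₁ * a₂ * c 0 with hs
      have hsne : s ≠ 0 := mul_ne_zero (mul_ne_zero h1 h2) hci
      refine ⟨![s, s * a₁, s * a₂], ?_, ?_⟩
      · intro i; fin_cases i <;> simp [mul_ne_zero, hsne, h1, h2]
      · intro i; fin_cases i
        · simpa using mem0
        · have := hI (b 2) _ mem0
          rw [map_smul, hb20, smul_smul] at this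
          simpa [mul_comm] using this
        · have := I.neg_mem (hI (b 1) _ mem0)
          rw [map_smul, hb10] at this
          simp only [smul_neg, neg_neg, smul_smul] at this
          simpa [mul_comm] using this
    · -- c 1 ≠ 0, start from axis 1
      set s := a₀ * a₂ * c 1 with hs
      have hsne : s ≠ 0 := mul_ne_zero (mul_ne_zero h0 h2) hci
      refine ⟨![s * a₀, s, s * a₂], ?_, ?_⟩
      · intro i; fin_cases i <;> simp [mul_ne_zero, hsne, h0, h2]
      · intro i; fin_cases i
        · have := I.neg_mem (hI (b 2) _ mem1)
          rw [map_smul, hb21] at this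
          simp only [smul_neg, neg_neg, smul_smul] at this
          simpa [mul_comm] using this
        · simpa using mem1
        · have := hI (b 0) _ mem1
          rw [map_smul, hb01, smul_smul] at this
          simpa [mul_comm] using this
    · -- c 2 ≠ 0, start from axis 2
      set s := a₀ * a₁ * c 2 with hs
      have hsne : s ≠ 0 := mul_ne_zero (mul_ne_zero h0 h1) hci
      refine ⟨![s * a₀, s * a₁, s], ?_, ?_⟩
      · intro i; fin_cases i <;> simp [mul_ne_zero, hsne, h0, h1]
      · intro i; fin_cases i
        · have := hI (b 1) _ mem2
          rw [map_smul, hb12, smul_smul] at this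
          simpa [mul_comm] using this
        · have := I.neg_mem (hI (b 0) _ mem2)
          rw [map_smul, hb02] at this
          simp only [smul_neg, neg_neg, smul_smul] at this
          simpa [mul_comm] using this
        · simpa using mem2
  obtain ⟨t, htne, htI⟩ := spread
  -- step 3: finrank
  have hfinL : Module.Finite ℤ_[p] L := Module.Finite.of_basis b
  have hrL : Module.finrank ℤ_[p] L = 3 := by
    rw [Module.finrank_eq_card_basis b]; simp
  have hub : Module.finrank ℤ_[p] I ≤ 3 := hrL ▸ Submodule.finrank_le I
  have v : Fin 3 → I := fun i => ⟨t i • b i, htI i⟩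
  have hv : LinearIndependent ℤ_[p] (fun i => (⟨t i • b i, htI i⟩ : I)) := by
    rw [Fintype.linearIndependent_iff]
    intro g hg
    have hg' : ∑ i, (g i * t i) • b i = (0 : L) := by
      have := congrArg (I.subtype) hg
      simp only [map_sum, map_smul, Submodule.coe_subtype, map_zero] at this
      simpa [smul_smul] using this
    have hb := Fintype.linearIndependent_iff.mp b.linearIndependent (fun i => g i * t i) hg'
    intro i
    have := hb i
    rcases mul_eq_zero.mp this with h | h
    · exact h
    · exact absurd h (htne i)
  have hlb : 3 ≤ Module.finrank ℤ_[p] I := by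
    simpa using hv.fintype_card_le_finrank
  omega
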